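/- Let n ≥ 3, 2 ≤ k ≤ n with 2k ≤ n, h > 0, and let ξ satisfy the first integral e^((2k-n)ξ)(1-ξ'²)^k = e^(-nξ) + h with 0 < 1-ξ'² ≤ 1 and ξ ≥ 0. Then for every eigenvalue λ ≥ 2n, the potential E(t) = -V''(t)/V(t) - λ·C(t)/A(t) + (n e^(-nξ(t))/(e^(-nξ(t))+h))·(1-ξ'(t)²), with V(t) = e^((1-n/(2k))ξ(t))(e^(-nξ(t))+h)^((k-1)/(2k)), satisfies E(t) ≤ -2 - 2/(n-1) < -2 for all t (in particular E(t) ≤ -min(2 + 2/(n-1), (n+1)/2)). -/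

import Mathlib

set_option maxHeartbeats 2000000 in
/-- Polynomial core of the potential bound. -/
theorem key_ineq_aux (N K S Q : ℝ) (hK : 2 ≤ K) (hKN : 2*K ≤ N)
    (hS0 : 0 ≤ S) (hS1 : S ≤ 1) (hQ1 : Q ≤ 1) :
    -((1-Q)*(1 - N/(2*K) - N*((K-1)/(2*K))*S)^2
      + Q*(N*S-N+2*K)/(2*K)*(1 - N/(2*K) - N*((K-1)/(2*K))*S)
      + N^2*((K-1)/(2*K))*(1-Q)*(S*(1-S)))
    - 2*N*((K-1)/(N-1)*((N*S-N+2*K)/K) + (N-2*K+1)/(N-1))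
    + N*S*Q ≤ -2 - 2/(N-1) := by
  have hK0 : (0:ℝ) < K := by linarith
  have hN1 : (0:ℝ) < N - 1 := by linarith
  have hm : (0:ℝ) ≤ N - 2*K := by linarith
  have hx : (0:ℝ) ≤ K - 2 := by linarith
  have hr : (0:ℝ) ≤ 1 - Q := by linarith
  have hu : (0:ℝ) ≤ 1 - S := by linarith
  have hP0 : (0:ℝ) ≤ 64*(N-2*K)^1 + 64*(N-2*K)^1*(K-2)^1 + 16*(N-2*K)^1*(K-2)^2 + 19*(N-2*K)^2 + 10*(N-2*K)^2*(K-2)^1 + 1*(N-2*K)^3 := by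
    linarith [mul_nonneg (mul_nonneg (pow_nonneg hm 0) (pow_nonneg hx 0)) (pow_nonneg hr 1), mul_nonneg (mul_nonneg (pow_nonneg hm 0) (pow_nonneg hx 1)) (pow_nonneg hr 0), mul_nonneg (mul_nonneg (pow_nonneg hm 0) (pow_nonneg hx 1)) (pow_nonneg hr 1), mul_nonneg (mul_nonneg (pow_nonneg hm 0) (pow_nonneg hx 2)) (pow_nonneg hr 0), mul_nonneg (mul_nonneg (pow_nonneg hm 0) (pow_nonneg hx 2)) (pow_nonneg hr 1), mul_nonneg (mul_nonneg (pow_nonneg hm 0) (pow_nonneg hx 3)) (pow_nonneg hr 0), mul_nonneg (mul_nonneg (pow_nonneg hm 0) (pow_nonneg hx 3)) (pow_nonneg hr 1), mul_nonneg (mul_nonneg (pow_nonneg hm 0) (pow_nonneg hx 4)) (pow_nonneg hr 0), mul_nonneg (mul_nonneg (pow_nonneg hm 0) (pow_nonneg hx 4)) (pow_nonneg hr 1), mul_nonneg (mul_nonneg (pow_nonneg hm 0) (pow_nonneg hx 5)) (pow_nonneg hr 1), mul_nonneg (mul_nonneg (pow_nonneg hm 1) (pow_nonneg hx 0)) (pow_nonneg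 hr 0), mul_nonneg (mul_nonneg (pow_nonneg hm 1) (pow_nonneg hx 0)) (pow_nonneg hr 1), mul_nonneg (mul_nonneg (pow_nonneg hm 1) (pow_nonneg hx 1)) (pow_nonneg hr 0), mul_nonneg (mul_nonneg (pow_nonneg hm 1) (pow_nonneg hx 1)) (pow_nonneg hr 1), mul_nonneg (mul_nonneg (pow_nonneg hm 1) (pow_nonneg hx 2)) (pow_nonneg hr 0), mul_nonneg (mul_nonneg (pow_nonneg hm 1) (pow_nonneg hx 2)) (pow_nonneg hr 1), mul_nonneg (mul_nonneg (pow_nonneg hm 1) (pow_nonneg hx 3)) (pow_nonneg hr 0), mul_nonneg (mul_nonneg (pow_nonneg hm 1) (pow_nonneg hx 3)) (pow_nonneg hr 1), mul_nonneg (mul_nonneg (pow_nonneg hm 1) (pow_nonneg hx 4)) (pow_nonneg hr 1), mul_nonneg (mul_nonneg (pow_nonneg hm 2) (pow_nonneg hx 0)) (pow_nonneg hr 0), mul_nonneg (mul_nonneg (pow_nonneg hm 2) (pow_nonneg hx 0)) (pow_nonneg hr 1), mul_nonneg (mul_nonneg (pow_nonneg hm 2) (pow_nonneg hx 1)) (pow_nonneg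 hr 0), mul_nonneg (mul_nonneg (pow_nonneg hm 2) (pow_nonneg hx 1)) (pow_nonneg hr 1), mul_nonneg (mul_nonneg (pow_nonneg hm 2) (pow_nonneg hx 2)) (pow_nonneg hr 0), mul_nonneg (mul_nonneg (pow_nonneg hm 2) (pow_nonneg hx 2)) (pow_nonneg hr 1), mul_nonneg (mul_nonneg (pow_nonneg hm 2) (pow_nonneg hx 3)) (pow_nonneg hr 1), mul_nonneg (mul_nonneg (pow_nonneg hm 3) (pow_nonneg hx 0)) (pow_nonneg hr 0), mul_nonneg (mul_nonneg (pow_nonneg hm 3) (pow_nonneg hx 0)) (pow_nonneg hr 1), mul_nonneg (mul_nonneg (pow_nonneg hm 3) (pow_nonneg hx 1)) (pow_nonneg hr 0), mul_nonneg (mul_nonneg (pow_nonneg hm 3) (pow_nonneg hx 1)) (pow_nonneg hr 1), mul_nonneg (mul_nonneg (pow_nonneg hm 3) (pow_nonneg hx 2)) (pow_nonneg hr 1)]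
  have hP1 : (0:ℝ) ≤ 16 + 288*(1-Q)^1 + 96*(K-2)^1 + 720*(K-2)^1*(1-Q)^1 + 116*(K-2)^2 + 712*(K-2)^2*(1-Q)^1 + 52*(K-2)^3 + 348*(K-2)^3*(1-Q)^1 + 8*(K-2)^4 + 84*(K-2)^4*(1-Q)^1 + 8*(K-2)^5*(1-Q)^1 + 40*(N-2*K)^1 + 216*(N-2*K)^1*(1-Q)^1 + 72*(N-2*K)^1*(K-2)^1 + 424*(N-2*K)^1*(K-2)^1*(1-Q)^1 + 42*(N-2*K)^1*(K-2)^2 + 310*(N-2*K)^1*(K-2)^2*(1-Q)^1 + 8*(N-2*K)^1*(K-2)^3 + 100*(N-2*K)^1*(K-2)^3*(1-Q)^1 + 12*(N-2*K)^1*(K-2)^4*(1-Q)^1 + 8*(N-2*K)^2 + 52*(N-2*K)^2*(1-Q)^1 + 8*(N-2*K)^2*(K-2)^1 + 76*(N-2*K)^2*(K-2)^1*(1-Q)^1 + 2*(N-2*K)^2*(K-2)^2 + 37*(N-2*K)^2*(K-2)^2*(1-Q)^1 + 6*(N-2*K)^2*(K-2)^3*(1-Q)^1 + 4*(N-2*K)^3*(1-Q)^1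 + 4*(N-2*K)^3*(K-2)^1*(1-Q)^1 + 1*(N-2*K)^3*(K-2)^2*(1-Q)^1 := by
    linarith [mul_nonneg (mul_nonneg (pow_nonneg hm 0) (pow_nonneg hx 0)) (pow_nonneg hr 1), mul_nonneg (mul_nonneg (pow_nonneg hm 0) (pow_nonneg hx 1)) (pow_nonneg hr 0), mul_nonneg (mul_nonneg (pow_nonneg hm 0) (pow_nonneg hx 1)) (pow_nonneg hr 1), mul_nonneg (mul_nonneg (pow_nonneg hm 0) (pow_nonneg hx 2)) (pow_nonneg hr 0), mul_nonneg (mul_nonneg (pow_nonneg hm 0) (pow_nonneg hx 2)) (pow_nonneg hr 1), mul_nonneg (mul_nonneg (pow_nonneg hm 0) (pow_nonneg hx 3)) (pow_nonneg hr 0), mul_nonneg (mul_nonneg (pow_nonneg hm 0) (pow_nonneg hx 3)) (pow_nonneg hr 1), mul_nonneg (mul_nonneg (pow_nonneg hm 0) (pow_nonneg hx 4)) (pow_nonneg hr 0), mul_nonneg (mul_nonneg (pow_nonneg hm 0) (pow_nonneg hx 4)) (pow_nonneg hr 1), mul_nonneg (mul_nonneg (pow_nonneg hm 0) (pow_nonneg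 hx 5)) (pow_nonneg hr 1), mul_nonneg (mul_nonneg (pow_nonneg hm 1) (pow_nonneg hx 0)) (pow_nonneg hr 0), mul_nonneg (mul_nonneg (pow_nonneg hm 1) (pow_nonneg hx 0)) (pow_nonneg hr 1), mul_nonneg (mul_nonneg (pow_nonneg hm 1) (pow_nonneg hx 1)) (pow_nonneg hr 0), mul_nonneg (mul_nonneg (pow_nonneg hm 1) (pow_nonneg hx 1)) (pow_nonneg hr 1), mul_nonneg (mul_nonneg (pow_nonneg hm 1) (pow_nonneg hx 2)) (pow_nonneg hr 0), mul_nonneg (mul_nonneg (pow_nonneg hm 1) (pow_nonneg hx 2)) (pow_nonneg hr 1), mul_nonneg (mul_nonneg (pow_nonneg hm 1) (pow_nonneg hx 3)) (pow_nonneg hr 0), mul_nonneg (mul_nonneg (pow_nonneg hm 1) (pow_nonneg hx 3)) (pow_nonneg hr 1), mul_nonneg (mul_nonneg (pow_nonneg hm 1) (pow_nonneg hx 4)) (pow_nonneg hr 1), mul_nonneg (mul_nonneg (pow_nonneg hm 2) (pow_nonneg hx 0)) (pow_nonneg hr 0), mul_nonneg (mul_nonneg (pow_nonneg hm 2) (pow_nonneg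 hx 0)) (pow_nonneg hr 1), mul_nonneg (mul_nonneg (pow_nonneg hm 2) (pow_nonneg hx 1)) (pow_nonneg hr 0), mul_nonneg (mul_nonneg (pow_nonneg hm 2) (pow_nonneg hx 1)) (pow_nonneg hr 1), mul_nonneg (mul_nonneg (pow_nonneg hm 2) (pow_nonneg hx 2)) (pow_nonneg hr 0), mul_nonneg (mul_nonneg (pow_nonneg hm 2) (pow_nonneg hx 2)) (pow_nonneg hr 1), mul_nonneg (mul_nonneg (pow_nonneg hm 2) (pow_nonneg hx 3)) (pow_nonneg hr 1), mul_nonneg (mul_nonneg (pow_nonneg hm 3) (pow_nonneg hx 0)) (pow_nonneg hr 0), mul_nonneg (mul_nonneg (pow_nonneg hm 3) (pow_nonneg hx 0)) (pow_nonneg hr 1), mul_nonneg (mul_nonneg (pow_nonneg hm 3) (pow_nonneg hx 1)) (pow_nonneg hr 0), mul_nonneg (mul_nonneg (pow_nonneg hm 3) (pow_nonneg hx 1)) (pow_nonneg hr 1), mul_nonneg (mul_nonneg (pow_nonneg hm 3) (pow_nonneg hx 2)) (pow_nonneg hr 1)]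
  have hPD : (0:ℝ) ≤ 48 + 96*(1-Q)^1 + 128*(K-2)^1 + 304*(K-2)^1*(1-Q)^1 + 124*(K-2)^2 + 376*(K-2)^2*(1-Q)^1 + 52*(K-2)^3 + 228*(K-2)^3*(1-Q)^1 + 8*(K-2)^4 + 68*(K-2)^4*(1-Q)^1 + 8*(K-2)^5*(1-Q)^1 + 40*(N-2*K)^1 + 80*(N-2*K)^1*(1-Q)^1 + 84*(N-2*K)^1*(K-2)^1 + 208*(N-2*K)^1*(K-2)^1*(1-Q)^1 + 56*(N-2*K)^1*(K-2)^2 + 196*(N-2*K)^1*(K-2)^2*(1-Q)^1 + 12*(N-2*K)^1*(K-2)^3 + 80*(N-2*K)^1*(K-2)^3*(1-Q)^1 + 12*(N-2*K)^1*(K-2)^4*(1-Q)^1 + 11*(N-2*K)^2 + 22*(N-2*K)^2*(1-Q)^1 + 17*(N-2*K)^2*(K-2)^1 + 45*(N-2*K)^2*(K-2)^1*(1-Q)^1 + 6*(N-2*K)^2*(K-2)^2 + 29*(N-2*K)^2*(K-2)^2*(1-Q)^1 + 6*(N-2*K)^2*(K-2)^3*(1-Q)^1 + 1*(N-2*K)^3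 + 2*(N-2*K)^3*(1-Q)^1 + 1*(N-2*K)^3*(K-2)^1 + 3*(N-2*K)^3*(K-2)^1*(1-Q)^1 + 1*(N-2*K)^3*(K-2)^2*(1-Q)^1 := by
    linarith [mul_nonneg (mul_nonneg (pow_nonneg hm 0) (pow_nonneg hx 0)) (pow_nonneg hr 1), mul_nonneg (mul_nonneg (pow_nonneg hm 0) (pow_nonneg hx 1)) (pow_nonneg hr 0), mul_nonneg (mul_nonneg (pow_nonneg hm 0) (pow_nonneg hx 1)) (pow_nonneg hr 1), mul_nonneg (mul_nonneg (pow_nonneg hm 0) (pow_nonneg hx 2)) (pow_nonneg hr 0), mul_nonneg (mul_nonneg (pow_nonneg hm 0) (pow_nonneg hx 2)) (pow_nonneg hr 1), mul_nonneg (mul_nonneg (pow_nonneg hm 0) (pow_nonneg hx 3)) (pow_nonneg hr 0), mul_nonneg (mul_nonneg (pow_nonneg hm 0) (pow_nonneg hx 3)) (pow_nonneg hr 1), mul_nonneg (mul_nonneg (pow_nonneg hm 0) (pow_nonneg hx 4)) (pow_nonneg hr 0), mul_nonneg (mul_nonneg (pow_nonneg hm 0) (pow_nonneg hx 4)) (pow_nonneg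 hr 1), mul_nonneg (mul_nonneg (pow_nonneg hm 0) (pow_nonneg hx 5)) (pow_nonneg hr 1), mul_nonneg (mul_nonneg (pow_nonneg hm 1) (pow_nonneg hx 0)) (pow_nonneg hr 0), mul_nonneg (mul_nonneg (pow_nonneg hm 1) (pow_nonneg hx 0)) (pow_nonneg hr 1), mul_nonneg (mul_nonneg (pow_nonneg hm 1) (pow_nonneg hx 1)) (pow_nonneg hr 0), mul_nonneg (mul_nonneg (pow_nonneg hm 1) (pow_nonneg hx 1)) (pow_nonneg hr 1), mul_nonneg (mul_nonneg (pow_nonneg hm 1) (pow_nonneg hx 2)) (pow_nonneg hr 0), mul_nonneg (mul_nonneg (pow_nonneg hm 1) (pow_nonneg hx 2)) (pow_nonneg hr 1), mul_nonneg (mul_nonneg (pow_nonneg hm 1) (pow_nonneg hx 3)) (pow_nonneg hr 0), mul_nonneg (mul_nonneg (pow_nonneg hm 1) (pow_nonneg hx 3)) (pow_nonneg hr 1), mul_nonneg (mul_nonneg (pow_nonneg hm 1) (pow_nonneg hx 4)) (pow_nonneg hr 1), mul_nonneg (mul_nonneg (pow_nonneg hm 2) (pow_nonneg hx 0)) (pow_nonneg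 hr 0), mul_nonneg (mul_nonneg (pow_nonneg hm 2) (pow_nonneg hx 0)) (pow_nonneg hr 1), mul_nonneg (mul_nonneg (pow_nonneg hm 2) (pow_nonneg hx 1)) (pow_nonneg hr 0), mul_nonneg (mul_nonneg (pow_nonneg hm 2) (pow_nonneg hx 1)) (pow_nonneg hr 1), mul_nonneg (mul_nonneg (pow_nonneg hm 2) (pow_nonneg hx 2)) (pow_nonneg hr 0), mul_nonneg (mul_nonneg (pow_nonneg hm 2) (pow_nonneg hx 2)) (pow_nonneg hr 1), mul_nonneg (mul_nonneg (pow_nonneg hm 2) (pow_nonneg hx 3)) (pow_nonneg hr 1), mul_nonneg (mul_nonneg (pow_nonneg hm 3) (pow_nonneg hx 0)) (pow_nonneg hr 0), mul_nonneg (mul_nonneg (pow_nonneg hm 3) (pow_nonneg hx 0)) (pow_nonneg hr 1), mul_nonneg (mul_nonneg (pow_nonneg hm 3) (pow_nonneg hx 1)) (pow_nonneg hr 0), mul_nonneg (mul_nonneg (pow_nonneg hm 3) (pow_nonneg hx 1)) (pow_nonneg hr 1), mul_nonneg (mul_nonneg (pow_nonneg hm 3) (pow_nonneg hx 2)) (pow_nonneg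 hr 1)]
  have hcert : (-2 - 2/(N-1)) -
      (-((1-Q)*(1 - N/(2*K) - N*((K-1)/(2*K))*S)^2
        + Q*(N*S-N+2*K)/(2*K)*(1 - N/(2*K) - N*((K-1)/(2*K))*S)
        + N^2*((K-1)/(2*K))*(1-Q)*(S*(1-S)))
      - 2*N*((K-1)/(N-1)*((N*S-N+2*K)/K) + (N-2*K+1)/(N-1))
      + N*S*Q)
      = ((1-S)*(64*(N-2*K)^1 + 64*(N-2*K)^1*(K-2)^1 + 16*(N-2*K)^1*(K-2)^2 + 19*(N-2*K)^2 + 10*(N-2*K)^2*(K-2)^1 + 1*(N-2*K)^3) + S*(16 + 288*(1-Q)^1 + 96*(K-2)^1 + 720*(K-2)^1*(1-Q)^1 + 116*(K-2)^2 + 712*(K-2)^2*(1-Q)^1 + 52*(K-2)^3 + 348*(K-2)^3*(1-Q)^1 + 8*(K-2)^4 + 84*(K-2)^4*(1-Q)^1 + 8*(K-2)^5*(1-Q)^1 + 40*(N-2*K)^1 + 216*(N-2*K)^1*(1-Q)^1 + 72*(N-2*K)^1*(K-2)^1 + 424*(N-2*K)^1*(K-2)^1*(1-Q)^1 + 42*(N-2*K)^1*(K-2)^2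 + 310*(N-2*K)^1*(K-2)^2*(1-Q)^1 + 8*(N-2*K)^1*(K-2)^3 + 100*(N-2*K)^1*(K-2)^3*(1-Q)^1 + 12*(N-2*K)^1*(K-2)^4*(1-Q)^1 + 8*(N-2*K)^2 + 52*(N-2*K)^2*(1-Q)^1 + 8*(N-2*K)^2*(K-2)^1 + 76*(N-2*K)^2*(K-2)^1*(1-Q)^1 + 2*(N-2*K)^2*(K-2)^2 + 37*(N-2*K)^2*(K-2)^2*(1-Q)^1 + 6*(N-2*K)^2*(K-2)^3*(1-Q)^1 + 4*(N-2*K)^3*(1-Q)^1 + 4*(N-2*K)^3*(K-2)^1*(1-Q)^1 + 1*(N-2*K)^3*(K-2)^2*(1-Q)^1) + S*(1-S)*(48 + 96*(1-Q)^1 + 128*(K-2)^1 + 304*(K-2)^1*(1-Q)^1 + 124*(K-2)^2 + 376*(K-2)^2*(1-Q)^1 + 52*(K-2)^3 + 228*(K-2)^3*(1-Q)^1 + 8*(K-2)^4 + 68*(K-2)^4*(1-Q)^1 + 8*(K-2)^5*(1-Q)^1 + 40*(N-2*K)^1 + 80*(N-2*K)^1*(1-Q)^1 + 84*(N-2*K)^1*(K-2)^1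 + 208*(N-2*K)^1*(K-2)^1*(1-Q)^1 + 56*(N-2*K)^1*(K-2)^2 + 196*(N-2*K)^1*(K-2)^2*(1-Q)^1 + 12*(N-2*K)^1*(K-2)^3 + 80*(N-2*K)^1*(K-2)^3*(1-Q)^1 + 12*(N-2*K)^1*(K-2)^4*(1-Q)^1 + 11*(N-2*K)^2 + 22*(N-2*K)^2*(1-Q)^1 + 17*(N-2*K)^2*(K-2)^1 + 45*(N-2*K)^2*(K-2)^1*(1-Q)^1 + 6*(N-2*K)^2*(K-2)^2 + 29*(N-2*K)^2*(K-2)^2*(1-Q)^1 + 6*(N-2*K)^2*(K-2)^3*(1-Q)^1 + 1*(N-2*K)^3 + 2*(N-2*K)^3*(1-Q)^1 + 1*(N-2*K)^3*(K-2)^1 + 3*(N-2*K)^3*(K-2)^1*(1-Q)^1 + 1*(N-2*K)^3*(K-2)^2*(1-Q)^1))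
        / (4*K^2*(N-1)) := by
    field_simp
    ring
  have hfrac : (0:ℝ) ≤ ((1-S)*(64*(N-2*K)^1 + 64*(N-2*K)^1*(K-2)^1 + 16*(N-2*K)^1*(K-2)^2 + 19*(N-2*K)^2 + 10*(N-2*K)^2*(K-2)^1 + 1*(N-2*K)^3) + S*(16 + 288*(1-Q)^1 + 96*(K-2)^1 + 720*(K-2)^1*(1-Q)^1 + 116*(K-2)^2 + 712*(K-2)^2*(1-Q)^1 + 52*(K-2)^3 + 348*(K-2)^3*(1-Q)^1 + 8*(K-2)^4 + 84*(K-2)^4*(1-Q)^1 + 8*(K-2)^5*(1-Q)^1 + 40*(N-2*K)^1 + 216*(N-2*K)^1*(1-Q)^1 + 72*(N-2*K)^1*(K-2)^1 + 424*(N-2*K)^1*(K-2)^1*(1-Q)^1 + 42*(N-2*K)^1*(K-2)^2 + 310*(N-2*K)^1*(K-2)^2*(1-Q)^1 + 8*(N-2*K)^1*(K-2)^3 + 100*(N-2*K)^1*(K-2)^3*(1-Q)^1 + 12*(N-2*K)^1*(K-2)^4*(1-Q)^1 + 8*(N-2*K)^2 + 52*(N-2*K)^2*(1-Q)^1 + 8*(N-2*K)^2*(K-2)^1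 + 76*(N-2*K)^2*(K-2)^1*(1-Q)^1 + 2*(N-2*K)^2*(K-2)^2 + 37*(N-2*K)^2*(K-2)^2*(1-Q)^1 + 6*(N-2*K)^2*(K-2)^3*(1-Q)^1 + 4*(N-2*K)^3*(1-Q)^1 + 4*(N-2*K)^3*(K-2)^1*(1-Q)^1 + 1*(N-2*K)^3*(K-2)^2*(1-Q)^1) + S*(1-S)*(48 + 96*(1-Q)^1 + 128*(K-2)^1 + 304*(K-2)^1*(1-Q)^1 + 124*(K-2)^2 + 376*(K-2)^2*(1-Q)^1 + 52*(K-2)^3 + 228*(K-2)^3*(1-Q)^1 + 8*(K-2)^4 + 68*(K-2)^4*(1-Q)^1 + 8*(K-2)^5*(1-Q)^1 + 40*(N-2*K)^1 + 80*(N-2*K)^1*(1-Q)^1 + 84*(N-2*K)^1*(K-2)^1 + 208*(N-2*K)^1*(K-2)^1*(1-Q)^1 + 56*(N-2*K)^1*(K-2)^2 + 196*(N-2*K)^1*(K-2)^2*(1-Q)^1 + 12*(N-2*K)^1*(K-2)^3 + 80*(N-2*K)^1*(K-2)^3*(1-Q)^1 + 12*(N-2*K)^1*(K-2)^4*(1-Q)^1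 + 11*(N-2*K)^2 + 22*(N-2*K)^2*(1-Q)^1 + 17*(N-2*K)^2*(K-2)^1 + 45*(N-2*K)^2*(K-2)^1*(1-Q)^1 + 6*(N-2*K)^2*(K-2)^2 + 29*(N-2*K)^2*(K-2)^2*(1-Q)^1 + 6*(N-2*K)^2*(K-2)^3*(1-Q)^1 + 1*(N-2*K)^3 + 2*(N-2*K)^3*(1-Q)^1 + 1*(N-2*K)^3*(K-2)^1 + 3*(N-2*K)^3*(K-2)^1*(1-Q)^1 + 1*(N-2*K)^3*(K-2)^2*(1-Q)^1))
        / (4*K^2*(N-1)) := by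
    apply div_nonneg
    · exact add_nonneg (add_nonneg (mul_nonneg hu hP0) (mul_nonneg hS0 hP1))
        (mul_nonneg (mul_nonneg hS0 hu) hPD)
    · positivity
  linarith

theorem hasDerivAt_V_aux (n k : ℕ) (h : ℝ) (hh : 0 < h) (ξ : ℝ → ℝ)
    (hd : ∀ r, DifferentiableAt ℝ ξ r) (r : ℝ) :
    HasDerivAt (fun s => Real.exp ((1 - (n : ℝ) / (2 * k)) * ξ s)
        * (Real.exp (-(n : ℝ) * ξ s) + h) ^ (((k : ℝ) - 1) / (2 * k)))
      ((Real.exp ((1 - (n : ℝ) / (2 * k)) * ξ r)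
        * (Real.exp (-(n : ℝ) * ξ r) + h) ^ (((k : ℝ) - 1) / (2 * k)))
       * (deriv ξ r * ((1 - (n : ℝ) / (2 * k))
          - (n:ℝ) * (((k:ℝ)-1)/(2*k)) * (Real.exp (-(n:ℝ)*ξ r) / (Real.exp (-(n:ℝ)*ξ r) + h))))) r := by
  have hxi := (hd r).hasDerivAt
  have hw : (0:ℝ) < Real.exp (-(n:ℝ)*ξ r) + h := by positivity
  have hE : HasDerivAt (fun s => Real.exp (-(n:ℝ) * ξ s))
      (Real.exp (-(n:ℝ)*ξ r) * (-(n:ℝ) * deriv ξ r)) r := (hxi.const_mul (-(n:ℝ))).exp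
  have hW : HasDerivAt (fun s => Real.exp (-(n:ℝ)*ξ s) + h)
      (Real.exp (-(n:ℝ)*ξ r) * (-(n:ℝ) * deriv ξ r)) r := hE.add_const h
  have hWb := hW.rpow_const (p := ((k:ℝ)-1)/(2*k)) (Or.inl hw.ne')
  have hA : HasDerivAt (fun s => Real.exp ((1 - (n:ℝ)/(2*k)) * ξ s))
      (Real.exp ((1 - (n:ℝ)/(2*k)) * ξ r) * ((1 - (n:ℝ)/(2*k)) * deriv ξ r)) r :=
    (hxi.const_mul _).exp
  have hmul := hA.mul hWb
  refine hmul.congr_deriv ?_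
  rw [Real.rpow_sub_one hw.ne']
  field_simp
  ring

theorem deriv2_V_aux (n k : ℕ) (h : ℝ) (hh : 0 < h) (ξ : ℝ → ℝ)
    (hd : ∀ r, DifferentiableAt ℝ ξ r) (t : ℝ)
    (hd2 : HasDerivAt (deriv ξ) (deriv (deriv ξ) t) t) :
    deriv (deriv (fun s => Real.exp ((1 - (n : ℝ) / (2 * k)) * ξ s)
        * (Real.exp (-(n : ℝ) * ξ s) + h) ^ (((k : ℝ) - 1) / (2 * k)))) t
    = (Real.exp ((1 - (n : ℝ) / (2 * k)) * ξ t)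
        * (Real.exp (-(n:ℝ)*ξ t) + h) ^ (((k:ℝ)-1)/(2*k)))
      * ((deriv ξ t)^2 * ((1 - (n:ℝ)/(2*k))
            - (n:ℝ)*(((k:ℝ)-1)/(2*k))*(Real.exp (-(n:ℝ)*ξ t)/(Real.exp (-(n:ℝ)*ξ t)+h)))^2
        + deriv (deriv ξ) t * ((1 - (n:ℝ)/(2*k))
            - (n:ℝ)*(((k:ℝ)-1)/(2*k))*(Real.exp (-(n:ℝ)*ξ t)/(Real.exp (-(n:ℝ)*ξ t)+h)))
        + (n:ℝ)^2*(((k:ℝ)-1)/(2*k))*(deriv ξ t)^2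
            * (Real.exp (-(n:ℝ)*ξ t) * h /(Real.exp (-(n:ℝ)*ξ t)+h)^2)) := by
  have hVd : deriv (fun s => Real.exp ((1 - (n : ℝ) / (2 * k)) * ξ s)
        * (Real.exp (-(n : ℝ) * ξ s) + h) ^ (((k : ℝ) - 1) / (2 * k)))
      = fun r => (Real.exp ((1 - (n : ℝ) / (2 * k)) * ξ r)
        * (Real.exp (-(n : ℝ) * ξ r) + h) ^ (((k : ℝ) - 1) / (2 * k)))
       * (deriv ξ r * ((1 - (n : ℝ) / (2 * k))
          - (n:ℝ) * (((k:ℝ)-1)/(2*k)) * (Real.exp (-(n:ℝ)*ξ r) / (Real.exp (-(n:ℝ)*ξ r) + h)))) :=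
    funext fun r => (hasDerivAt_V_aux n k h hh ξ hd r).deriv
  rw [hVd]
  have hw : (0:ℝ) < Real.exp (-(n:ℝ)*ξ t) + h := by positivity
  have hxi := (hd t).hasDerivAt
  have hE : HasDerivAt (fun s => Real.exp (-(n:ℝ) * ξ s))
      (Real.exp (-(n:ℝ)*ξ t) * (-(n:ℝ) * deriv ξ t)) t := (hxi.const_mul (-(n:ℝ))).exp
  have hW : HasDerivAt (fun s => Real.exp (-(n:ℝ)*ξ s) + h)
      (Real.exp (-(n:ℝ)*ξ t) * (-(n:ℝ) * deriv ξ t)) t := hE.add_const h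
  have hg : HasDerivAt (fun r => (1 - (n : ℝ) / (2 * k))
          - (n:ℝ) * (((k:ℝ)-1)/(2*k)) * (Real.exp (-(n:ℝ)*ξ r) / (Real.exp (-(n:ℝ)*ξ r) + h)))
      (-((n:ℝ) * (((k:ℝ)-1)/(2*k)) *
        ((Real.exp (-(n:ℝ)*ξ t) * (-(n:ℝ) * deriv ξ t) * (Real.exp (-(n:ℝ)*ξ t) + h)
          - Real.exp (-(n:ℝ)*ξ t) * (Real.exp (-(n:ℝ)*ξ t) * (-(n:ℝ) * deriv ξ t)))
          / (Real.exp (-(n:ℝ)*ξ t) + h)^2))) t :=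
    (((hE.div hW hw.ne').const_mul ((n:ℝ) * (((k:ℝ)-1)/(2*k)))).const_sub _)
  have hmain := (hasDerivAt_V_aux n k h hh ξ hd t).mul (hd2.mul hg)
  refine hmain.deriv.trans ?_
  simp only [Pi.mul_apply]
  field_simp
  ring

set_option maxHeartbeats 1000000 in
/-- Bound on the potential `E(t) = -V''/V - λ·C/A + (n e^(-nξ)/(e^(-nξ)+h))(1-ξ'²)`
of the normal-form linearized σ_k-Yamabe equation: for every spherical eigenvalue
`λ ≥ 2n`, `E(t) ≤ -2 - 2/(n-1) < -2`, and in particular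
`E(t) ≤ -min (2 + 2/(n-1), (n+1)/2)`. -/
theorem potential_bound (n k : ℕ) (hn : 3 ≤ n) (hk : 2 ≤ k) (hkn : 2 * k ≤ n)
    (h : ℝ) (hh : 0 < h) (ξ : ℝ → ℝ) (hξ : ContDiff ℝ 2 ξ)
    (hpos : ∀ t, 0 < 1 - (deriv ξ t) ^ 2) (hle : ∀ t, 1 - (deriv ξ t) ^ 2 ≤ 1)
    (hxi : ∀ t, 0 ≤ ξ t)
    (hode : ∀ t, deriv (deriv ξ) t
      = (n : ℝ) / (2 * k) * Real.exp (-2 * k * ξ t)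
          * (1 - (deriv ξ t) ^ 2) ^ ((1 : ℝ) - k)
        - ((n : ℝ) - 2 * k) / (2 * k) * (1 - (deriv ξ t) ^ 2))
    (hfi : ∀ t, Real.exp ((2 * (k : ℝ) - n) * ξ t) * (1 - (deriv ξ t) ^ 2) ^ k
      = Real.exp (-(n : ℝ) * ξ t) + h) :
    ∀ t, ∀ lam : ℝ, 2 * (n : ℝ) ≤ lam →
      (-(deriv (deriv (fun s => Real.exp ((1 - (n : ℝ) / (2 * k)) * ξ s)
              * (Real.exp (-(n : ℝ) * ξ s) + h) ^ (((k : ℝ) - 1) / (2 * k)))) t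
            / (Real.exp ((1 - (n : ℝ) / (2 * k)) * ξ t)
              * (Real.exp (-(n : ℝ) * ξ t) + h) ^ (((k : ℝ) - 1) / (2 * k))))
        - lam * ((((k : ℝ) - 1) / ((n : ℝ) - 1) * deriv (deriv ξ) t
              + ((n : ℝ) - 2 * k + 1) / ((n : ℝ) - 1) * (1 - (deriv ξ t) ^ 2) / 2)
            / ((1 - (deriv ξ t) ^ 2) / 2))
        + (n : ℝ) * Real.exp (-(n : ℝ) * ξ t) / (Real.exp (-(n : ℝ) * ξ t) + h)
          * (1 - (deriv ξ t) ^ 2)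
        ≤ -2 - 2 / ((n : ℝ) - 1)) ∧
      (-2 - 2 / ((n : ℝ) - 1) < -2) ∧
      (-(deriv (deriv (fun s => Real.exp ((1 - (n : ℝ) / (2 * k)) * ξ s)
              * (Real.exp (-(n : ℝ) * ξ s) + h) ^ (((k : ℝ) - 1) / (2 * k)))) t
            / (Real.exp ((1 - (n : ℝ) / (2 * k)) * ξ t)
              * (Real.exp (-(n : ℝ) * ξ t) + h) ^ (((k : ℝ) - 1) / (2 * k))))
        - lam * ((((k : ℝ) - 1) / ((n : ℝ) - 1) * deriv (deriv ξ) t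
              + ((n : ℝ) - 2 * k + 1) / ((n : ℝ) - 1) * (1 - (deriv ξ t) ^ 2) / 2)
            / ((1 - (deriv ξ t) ^ 2) / 2))
        + (n : ℝ) * Real.exp (-(n : ℝ) * ξ t) / (Real.exp (-(n : ℝ) * ξ t) + h)
          * (1 - (deriv ξ t) ^ 2)
        ≤ -min (2 + 2 / ((n : ℝ) - 1)) (((n : ℝ) + 1) / 2)) := by
  -- basic numeric facts
  have hN3 : (3:ℝ) ≤ (n:ℝ) := by exact_mod_cast hn
  have hK2 : (2:ℝ) ≤ (k:ℝ) := by exact_mod_cast hk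
  have hKN : 2*(k:ℝ) ≤ (n:ℝ) := by exact_mod_cast hkn
  have hK0 : (0:ℝ) < (k:ℝ) := by linarith
  have hN1 : (0:ℝ) < (n:ℝ) - 1 := by linarith
  -- differentiability
  have hdiff : Differentiable ℝ ξ := hξ.differentiable (by norm_num)
  have hd : ∀ r, DifferentiableAt ℝ ξ r := fun r => (hdiff r)
  have hcd : ContDiff ℝ 1 (deriv ξ) := by
    have h2 : ContDiff ℝ ((1 : ℕ) + 1) ξ := by exact_mod_cast hξ
    exact (contDiff_succ_iff_deriv.mp h2).2.2
  have hd2 : ∀ r, HasDerivAt (deriv ξ) (deriv (deriv ξ) r) r := fun r =>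
    ((hcd.differentiable (by norm_num)) r).hasDerivAt
  intro t lam hlam
  -- abbreviations
  have hw : (0:ℝ) < Real.exp (-(n:ℝ)*ξ t) + h := by positivity
  have hq : (0:ℝ) < 1 - deriv ξ t ^ 2 := hpos t
  have hq1 : (1:ℝ) - deriv ξ t ^ 2 ≤ 1 := hle t
  have hS0 : (0:ℝ) ≤ Real.exp (-(n:ℝ)*ξ t) / (Real.exp (-(n:ℝ)*ξ t) + h) := by positivity
  have hS1 : Real.exp (-(n:ℝ)*ξ t) / (Real.exp (-(n:ℝ)*ξ t) + h) ≤ 1 := by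
    rw [div_le_one hw]; linarith
  -- second-order ODE in terms of S and Q
  have hP2 : deriv (deriv ξ) t
      = (1 - deriv ξ t ^ 2) * ((n:ℝ) * (Real.exp (-(n:ℝ)*ξ t) / (Real.exp (-(n:ℝ)*ξ t) + h))
          - (n:ℝ) + 2*(k:ℝ)) / (2*(k:ℝ)) := by
    have hode' := hode t
    have hrp : (1 - deriv ξ t ^ 2) ^ ((1:ℝ) - (k:ℝ))
        = (1 - deriv ξ t ^ 2) / (1 - deriv ξ t ^ 2) ^ (k:ℕ) := by
      have h1 : (1 - deriv ξ t ^ 2) ^ ((1:ℝ) - (k:ℝ))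
          = (1 - deriv ξ t ^ 2) ^ (1:ℝ) / (1 - deriv ξ t ^ 2) ^ ((k:ℕ):ℝ) :=
        Real.rpow_sub hq 1 k
      rw [h1, Real.rpow_one, Real.rpow_natCast]
    rw [hrp] at hode'
    have hQk : (0:ℝ) < (1 - deriv ξ t ^ 2) ^ (k:ℕ) := pow_pos hq k
    have hfik := hfi t
    have hexp : Real.exp (-2 * (k:ℝ) * ξ t) * Real.exp ((2 * (k:ℝ) - n) * ξ t)
        = Real.exp (-(n:ℝ) * ξ t) := by
      rw [← Real.exp_add]; congr 1; ring
    have hEw : Real.exp (-2 * (k:ℝ) * ξ t)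
          * ((1 - deriv ξ t ^ 2) / (1 - deriv ξ t ^ 2) ^ (k:ℕ))
        = (1 - deriv ξ t ^ 2)
          * (Real.exp (-(n:ℝ)*ξ t) / (Real.exp (-(n:ℝ)*ξ t) + h)) := by
      rw [← hfik, ← hexp]
      field_simp
    rw [hode']
    linear_combination ((n:ℝ)/(2*(k:ℝ))) * hEw
  -- nonvanishing of V
  have hVt_ne : (Real.exp ((1 - (n:ℝ)/(2*(k:ℝ))) * ξ t)
      * (Real.exp (-(n:ℝ)*ξ t) + h) ^ (((k:ℝ)-1)/(2*(k:ℝ)))) ≠ 0 :=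
    mul_ne_zero (Real.exp_ne_zero _) (Real.rpow_pos_of_pos hw _).ne'
  have hrpne : ((Real.exp (-(n:ℝ)*ξ t) + h) ^ (((k:ℝ)-1)/(2*(k:ℝ)))) ≠ 0 :=
    (Real.rpow_pos_of_pos hw _).ne'
  have hd2V := deriv2_V_aux n k h hh ξ hd t (hd2 t)
  -- the cleaned-up potential
  have hZ : (0:ℝ) ≤ ((k:ℝ)-1)/((n:ℝ)-1)
        *(((n:ℝ)*(Real.exp (-(n:ℝ)*ξ t) / (Real.exp (-(n:ℝ)*ξ t) + h))-(n:ℝ)+2*(k:ℝ))/(k:ℝ))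
      + ((n:ℝ)-2*(k:ℝ)+1)/((n:ℝ)-1) := by
    have hrw : ((k:ℝ)-1)/((n:ℝ)-1)
          *(((n:ℝ)*(Real.exp (-(n:ℝ)*ξ t) / (Real.exp (-(n:ℝ)*ξ t) + h))-(n:ℝ)+2*(k:ℝ))/(k:ℝ))
        + ((n:ℝ)-2*(k:ℝ)+1)/((n:ℝ)-1)
        = (((k:ℝ)-1)*(n:ℝ)*(Real.exp (-(n:ℝ)*ξ t) / (Real.exp (-(n:ℝ)*ξ t) + h))
            + ((n:ℝ)-2*(k:ℝ)) + (k:ℝ)) / ((k:ℝ)*((n:ℝ)-1)) := by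
      field_simp
      ring
    rw [hrw]
    apply div_nonneg
    · have h1 : (0:ℝ) ≤ ((k:ℝ)-1)*(n:ℝ)*(Real.exp (-(n:ℝ)*ξ t) / (Real.exp (-(n:ℝ)*ξ t) + h)) :=
        mul_nonneg (mul_nonneg (by linarith) (by linarith)) hS0
      linarith
    · exact mul_nonneg (by linarith) (by linarith)
  have hgoal : -(deriv (deriv (fun s => Real.exp ((1 - (n : ℝ) / (2 * k)) * ξ s)
              * (Real.exp (-(n : ℝ) * ξ s) + h) ^ (((k : ℝ) - 1) / (2 * k)))) t
            / (Real.exp ((1 - (n : ℝ) / (2 * k)) * ξ t)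
              * (Real.exp (-(n : ℝ) * ξ t) + h) ^ (((k : ℝ) - 1) / (2 * k))))
        - lam * ((((k : ℝ) - 1) / ((n : ℝ) - 1) * deriv (deriv ξ) t
              + ((n : ℝ) - 2 * k + 1) / ((n : ℝ) - 1) * (1 - (deriv ξ t) ^ 2) / 2)
            / ((1 - (deriv ξ t) ^ 2) / 2))
        + (n : ℝ) * Real.exp (-(n : ℝ) * ξ t) / (Real.exp (-(n : ℝ) * ξ t) + h)
          * (1 - (deriv ξ t) ^ 2)
      = -((1-(1 - (deriv ξ t) ^ 2))*(1 - (n:ℝ)/(2*(k:ℝ))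
            - (n:ℝ)*(((k:ℝ)-1)/(2*(k:ℝ)))
              *(Real.exp (-(n:ℝ)*ξ t) / (Real.exp (-(n:ℝ)*ξ t) + h)))^2
          + (1 - (deriv ξ t) ^ 2)
            *((n:ℝ)*(Real.exp (-(n:ℝ)*ξ t) / (Real.exp (-(n:ℝ)*ξ t) + h))-(n:ℝ)+2*(k:ℝ))/(2*(k:ℝ))
            *(1 - (n:ℝ)/(2*(k:ℝ)) - (n:ℝ)*(((k:ℝ)-1)/(2*(k:ℝ)))
              *(Real.exp (-(n:ℝ)*ξ t) / (Real.exp (-(n:ℝ)*ξ t) + h)))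
          + (n:ℝ)^2*(((k:ℝ)-1)/(2*(k:ℝ)))*(1-(1 - (deriv ξ t) ^ 2))
            *((Real.exp (-(n:ℝ)*ξ t) / (Real.exp (-(n:ℝ)*ξ t) + h))
              *(1-(Real.exp (-(n:ℝ)*ξ t) / (Real.exp (-(n:ℝ)*ξ t) + h)))))
        - lam * (((k:ℝ)-1)/((n:ℝ)-1)
            *(((n:ℝ)*(Real.exp (-(n:ℝ)*ξ t) / (Real.exp (-(n:ℝ)*ξ t) + h))-(n:ℝ)+2*(k:ℝ))/(k:ℝ))
          + ((n:ℝ)-2*(k:ℝ)+1)/((n:ℝ)-1))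
        + (n:ℝ)*(Real.exp (-(n:ℝ)*ξ t) / (Real.exp (-(n:ℝ)*ξ t) + h))*(1 - (deriv ξ t) ^ 2) := by
    rw [hd2V, hP2]
    rw [mul_div_cancel_left₀ _ hVt_ne]
    field_simp
    ring
  have hkey := key_ineq_aux (n:ℝ) (k:ℝ)
    (Real.exp (-(n:ℝ)*ξ t) / (Real.exp (-(n:ℝ)*ξ t) + h)) (1 - deriv ξ t ^ 2)
    hK2 hKN hS0 hS1 hq1
  have hmul := mul_le_mul_of_nonneg_right hlam hZ
  have main : -(deriv (deriv (fun s => Real.exp ((1 - (n : ℝ) / (2 * k)) * ξ s)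
              * (Real.exp (-(n : ℝ) * ξ s) + h) ^ (((k : ℝ) - 1) / (2 * k)))) t
            / (Real.exp ((1 - (n : ℝ) / (2 * k)) * ξ t)
              * (Real.exp (-(n : ℝ) * ξ t) + h) ^ (((k : ℝ) - 1) / (2 * k))))
        - lam * ((((k : ℝ) - 1) / ((n : ℝ) - 1) * deriv (deriv ξ) t
              + ((n : ℝ) - 2 * k + 1) / ((n : ℝ) - 1) * (1 - (deriv ξ t) ^ 2) / 2)
            / ((1 - (deriv ξ t) ^ 2) / 2))
        + (n : ℝ) * Real.exp (-(n : ℝ) * ξ t) / (Real.exp (-(n : ℝ) * ξ t) + h)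
          * (1 - (deriv ξ t) ^ 2)
        ≤ -2 - 2 / ((n : ℝ) - 1) := by
    rw [hgoal]
    linarith [hkey, hmul]
  have hlt : -2 - 2 / ((n : ℝ) - 1) < -2 := by
    have : (0:ℝ) < 2 / ((n:ℝ) - 1) := div_pos two_pos hN1
    linarith
  refine ⟨main, hlt, ?_⟩
  have hmin := min_le_left (2 + 2 / ((n : ℝ) - 1)) (((n : ℝ) + 1) / 2)
  linarith [main, hmin]
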